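/- arXiv:2601.12439 — 2 statements merged into one kernel-verified Lean document; each statement's English description precedes it below -/
import Mathlib

section
/- The class of equivalence relations with all classes of size at most two has the amalgamation property: suppose E₀, E₁, E₂ are equivalence relations on sets S₀ ⊆ S₁ and S₀ ⊆ S₂ respectively, all with classes of size at most 2, and E₁ and E₂ both restrict to E₀ on S₀. Then there exist a set S, an equivalence relation E on S with all classes of size at most 2, and injective maps f₁ : S₁ → S, f₂ : S₂ → S that agree on S₀ and each preserve and reflect the equivalence relation. -/
lemma tri_of_encard_le_two {α : Type*} {s : Set α} (h : s.encard ≤ 2) :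
    ∀ a ∈ s, ∀ b ∈ s, ∀ c ∈ s, a = b ∨ a = c ∨ b = c := by
  intro a ha b hb c hc
  by_contra hcon
  push_neg at hcon
  obtain ⟨hab, hac, hbc⟩ := hcon
  have hsub : ({a, b, c} : Set α) ⊆ s := by
    intro x hx; rcases hx with rfl | rfl | rfl <;> assumption
  have h3 : ({a, b, c} : Set α).encard = 3 := by
    rw [Set.encard_insert_of_notMem (by simp [hab, hac]), Set.encard_pair hbc]; rfl
  have := (Set.encard_mono hsub).trans h
  rw [h3] at this
  norm_num at this

lemma encard_le_two_of_tri {α : Type*} {s : Set α}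
    (h : ∀ a ∈ s, ∀ b ∈ s, ∀ c ∈ s, a = b ∨ a = c ∨ b = c) : s.encard ≤ 2 := by
  rcases s.eq_empty_or_nonempty with rfl | ⟨a, ha⟩
  · simp
  by_cases hs : ∀ c ∈ s, c = a
  · have : s ⊆ {a} := fun x hx => hs x hx
    calc s.encard ≤ ({a} : Set α).encard := Set.encard_mono this
      _ = 1 := Set.encard_singleton a
      _ ≤ 2 := by norm_num
  · push_neg at hs
    obtain ⟨b, hb, hba⟩ := hs
    have hsub : s ⊆ {a, b} := by
      intro c hc
      rcases h a ha c hc b hb with h1 | h1 | h1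
      · exact Or.inl h1.symm
      · exact absurd h1 (fun e => hba e.symm)
      · exact Or.inr (by simp [h1.symm])
    calc s.encard ≤ ({a, b} : Set α).encard := Set.encard_mono hsub
      _ = 2 := Set.encard_pair (fun e => hba e.symm)

lemma incl_eq_mem {U : Type*} {S₀ S₂ : Set U} (h02 : S₀ ⊆ S₂) (c : ↥S₀) {b : ↥S₂}
    (h : Set.inclusion h02 c = b) : (b : U) ∈ S₀ := by subst h; exact c.2

section Amalg

variable {U : Type u} {S₀ S₁ S₂ : Set U} (h01 : S₀ ⊆ S₁) (h02 : S₀ ⊆ S₂)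
  (E₁ : S₁ → S₁ → Prop) (E₂ : S₂ → S₂ → Prop)

/-- gluing relation between S₁ and S₂ -/
def amalgGlue (a : S₁) (b : S₂) : Prop :=
  ((a : U) = (b : U) ∧ (a : U) ∈ S₀) ∨
  ((a : U) ∉ S₀ ∧ (b : U) ∉ S₀ ∧
    ∃ c : S₀, E₁ (Set.inclusion h01 c) a ∧ E₂ (Set.inclusion h02 c) b)

/-- identification relation on the sum -/
def amalgR : S₁ ⊕ S₂ → S₁ ⊕ S₂ → Prop
  | .inl a, .inl a' => a = a'
  | .inl a, .inr b => amalgGlue h01 h02 E₁ E₂ a b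
  | .inr b, .inl a => amalgGlue h01 h02 E₁ E₂ a b
  | .inr b, .inr b' => b = b'

/-- amalgamated equivalence relation on the sum -/
def amalgE : S₁ ⊕ S₂ → S₁ ⊕ S₂ → Prop
  | .inl a, .inl a' => E₁ a a'
  | .inl a, .inr b => ∃ c : S₀, E₁ a (Set.inclusion h01 c) ∧ E₂ (Set.inclusion h02 c) b
  | .inr b, .inl a => ∃ c : S₀, E₁ a (Set.inclusion h01 c) ∧ E₂ (Set.inclusion h02 c) b
  | .inr b, .inr b' => E₂ b b'

end Amalg

/-- Amalgamation property for equivalence relations with classes of size at most 2. -/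
theorem stmt_3 {U : Type u} (S₀ S₁ S₂ : Set U) (h01 : S₀ ⊆ S₁) (h02 : S₀ ⊆ S₂)
    (E₀ : S₀ → S₀ → Prop) (E₁ : S₁ → S₁ → Prop) (E₂ : S₂ → S₂ → Prop)
    (hE₀ : Equivalence E₀) (hE₁ : Equivalence E₁) (hE₂ : Equivalence E₂)
    (hs₀ : ∀ x, Set.encard {y | E₀ x y} ≤ 2)
    (hs₁ : ∀ x, Set.encard {y | E₁ x y} ≤ 2)
    (hs₂ : ∀ x, Set.encard {y | E₂ x y} ≤ 2)
    (hr₁ : ∀ x y : S₀, E₀ x y ↔ E₁ (Set.inclusion h01 x) (Set.inclusion h01 y))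
    (hr₂ : ∀ x y : S₀, E₀ x y ↔ E₂ (Set.inclusion h02 x) (Set.inclusion h02 y)) :
    ∃ (S : Type u) (E : S → S → Prop), Equivalence E ∧
      (∀ x, Set.encard {y | E x y} ≤ 2) ∧
      ∃ (f₁ : S₁ → S) (f₂ : S₂ → S), Function.Injective f₁ ∧ Function.Injective f₂ ∧
        (∀ x y, E₁ x y ↔ E (f₁ x) (f₁ y)) ∧ (∀ x y, E₂ x y ↔ E (f₂ x) (f₂ y)) ∧
        (∀ x : S₀, f₁ (Set.inclusion h01 x) = f₂ (Set.inclusion h02 x)) := by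
  classical
  set ι₁ : S₀ → S₁ := Set.inclusion h01 with hι₁
  set ι₂ : S₀ → S₂ := Set.inclusion h02 with hι₂
  -- transfer between E₁ and E₂ on S₀
  have hr : ∀ x y : S₀, E₁ (ι₁ x) (ι₁ y) ↔ E₂ (ι₂ x) (ι₂ y) :=
    fun x y => ⟨fun h => (hr₂ x y).1 ((hr₁ x y).2 h), fun h => (hr₁ x y).1 ((hr₂ x y).2 h)⟩
  -- triangle facts
  have tri₁ : ∀ a a' a'' : S₁, E₁ a a' → E₁ a a'' → a = a' ∨ a = a'' ∨ a' = a'' := by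
    intro a a' a'' h1 h2
    have := tri_of_encard_le_two (hs₁ a) a (hE₁.refl a) a' h1 a'' h2
    tauto
  have tri₂ : ∀ b b' b'' : S₂, E₂ b b' → E₂ b b'' → b = b' ∨ b = b'' ∨ b' = b'' := by
    intro b b' b'' h1 h2
    have := tri_of_encard_le_two (hs₂ b) b (hE₂.refl b) b' h1 b'' h2
    tauto
  set G : S₁ → S₂ → Prop := amalgGlue h01 h02 E₁ E₂ with hG
  set R : S₁ ⊕ S₂ → S₁ ⊕ S₂ → Prop := amalgR h01 h02 E₁ E₂ with hR
  set Eh : S₁ ⊕ S₂ → S₁ ⊕ S₂ → Prop := amalgE h01 h02 E₁ E₂ with hEh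
  -- uniqueness of glue partners
  have U1 : ∀ (a a' : S₁) (b : S₂), G a b → G a' b → a = a' := by
    intro a a' b hab hab'
    rcases hab with ⟨e, hmem⟩ | ⟨ha, hb, c, hc1, hc2⟩
    · rcases hab' with ⟨e', hmem'⟩ | ⟨ha', hb', c', hc1', hc2'⟩
      · exact Subtype.ext (e.trans e'.symm)
      · exact absurd (e ▸ hmem) hb'
    · rcases hab' with ⟨e', hmem'⟩ | ⟨ha', hb', c', hc1', hc2'⟩
      · exact absurd (e' ▸ hmem') hb
      · -- E₂ (ι₂ c) b, E₂ (ι₂ c') b ⟹ c = c'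
        have hcc' : ι₂ c = ι₂ c' := by
          rcases tri₂ b (ι₂ c) (ι₂ c') (hE₂.symm hc2) (hE₂.symm hc2') with h | h | h
          · exact absurd (h ▸ c.2 : (b : U) ∈ S₀) hb
          · exact absurd (h ▸ c'.2 : (b : U) ∈ S₀) hb
          · exact h
        have hcc : c = c' := Set.inclusion_injective h02 hcc'
        subst hcc
        rcases tri₁ (ι₁ c) a a' hc1 hc1' with h | h | h
        · exact absurd (h ▸ c.2 : (a : U) ∈ S₀) ha
        · exact absurd (h ▸ c.2 : (a' : U) ∈ S₀) ha'
        · exact h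
  have U2 : ∀ (a : S₁) (b b' : S₂), G a b → G a b' → b = b' := by
    intro a b b' hab hab'
    rcases hab with ⟨e, hmem⟩ | ⟨ha, hb, c, hc1, hc2⟩
    · rcases hab' with ⟨e', hmem'⟩ | ⟨ha', hb', c', hc1', hc2'⟩
      · exact Subtype.ext (e.symm.trans e')
      · exact absurd hmem ha'
    · rcases hab' with ⟨e', hmem'⟩ | ⟨ha', hb', c', hc1', hc2'⟩
      · exact absurd hmem' ha
      · have hcc' : ι₁ c = ι₁ c' := by
          rcases tri₁ a (ι₁ c) (ι₁ c') (hE₁.symm hc1) (hE₁.symm hc1') with h | h | h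
          · exact absurd (h ▸ c.2 : (a : U) ∈ S₀) ha
          · exact absurd (h ▸ c'.2 : (a : U) ∈ S₀) ha
          · exact h
        have hcc : c = c' := Set.inclusion_injective h01 hcc'
        subst hcc
        rcases tri₂ (ι₂ c) b b' hc2 hc2' with h | h | h
        · exact absurd (h ▸ c.2 : (b : U) ∈ S₀) hb
        · exact absurd (h ▸ c.2 : (b' : U) ∈ S₀) hb'
        · exact h
  -- R is an equivalence
  have hReq : Equivalence R := by
    constructor
    · rintro (a | b) <;> rfl
    · rintro (a | b) (a' | b') h <;> simp only [hR, amalgR] at h ⊢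
      · exact h.symm
      · exact h
      · exact h
      · exact h.symm
    · rintro (a | b) (a' | b') (a'' | b'') h1 h2 <;>
        simp only [hR, amalgR] at h1 h2 ⊢
      · exact h1.trans h2
      · exact h1 ▸ h2
      · exact U1 a a'' b' h1 h2
      · exact h2 ▸ h1
      · exact h2 ▸ h1
      · exact U2 a' b b'' h1 h2
      · exact h1.symm ▸ h2
      · exact h1.trans h2

  -- Eh is an equivalence
  have hEheq : Equivalence Eh := by
    constructor
    · rintro (a | b)
      · exact hE₁.refl a
      · exact hE₂.refl b
    · rintro (a | b) (a' | b') h <;> simp only [hEh, amalgE] at h ⊢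
      · exact hE₁.symm h
      · exact h
      · exact h
      · exact hE₂.symm h
    · rintro (a | b) (a' | b') (a'' | b'') h1 h2 <;>
        simp only [hEh, amalgE] at h1 h2 ⊢
      · exact hE₁.trans h1 h2
      · obtain ⟨c, hc1, hc2⟩ := h2; exact ⟨c, hE₁.trans h1 hc1, hc2⟩
      · obtain ⟨c, hc1, hc2⟩ := h1; obtain ⟨c', hc1', hc2'⟩ := h2
        have hcc : E₂ (ι₂ c) (ι₂ c') := hE₂.trans hc2 (hE₂.symm hc2')
        exact hE₁.trans hc1 (hE₁.trans ((hr c c').2 hcc) (hE₁.symm hc1'))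
      · obtain ⟨c, hc1, hc2⟩ := h1; exact ⟨c, hc1, hE₂.trans hc2 h2⟩
      · obtain ⟨c, hc1, hc2⟩ := h1; exact ⟨c, hE₁.trans (hE₁.symm h2) hc1, hc2⟩
      · obtain ⟨c, hc1, hc2⟩ := h1; obtain ⟨c', hc1', hc2'⟩ := h2
        have hcc : E₁ (ι₁ c) (ι₁ c') := hE₁.trans (hE₁.symm hc1) hc1'
        exact hE₂.trans (hE₂.symm hc2) (hE₂.trans ((hr c c').1 hcc) hc2')
      · obtain ⟨c, hc1, hc2⟩ := h2; exact ⟨c, hc1, hE₂.trans hc2 (hE₂.symm h1)⟩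
      · exact hE₂.trans h1 h2
  -- R implies Eh
  have RleE : ∀ t u, R t u → Eh t u := by
    rintro (a | b) (a' | b') h <;>
      simp only [hR, amalgR, hG, amalgGlue, hEh, amalgE] at h ⊢
    · exact h ▸ hE₁.refl a
    · rcases h with ⟨e, hmem⟩ | ⟨ha, hb, c, hc1, hc2⟩
      · refine ⟨⟨(a : U), hmem⟩, ?_, ?_⟩
        · rw [show Set.inclusion h01 (⟨(a : U), hmem⟩ : S₀) = a from Subtype.ext rfl]
          exact hE₁.refl a
        · rw [show Set.inclusion h02 (⟨(a : U), hmem⟩ : S₀) = b' from Subtype.ext e]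
          exact hE₂.refl b'
      · exact ⟨c, hE₁.symm hc1, hc2⟩
    · rcases h with ⟨e, hmem⟩ | ⟨ha, hb, c, hc1, hc2⟩
      · refine ⟨⟨(a' : U), hmem⟩, ?_, ?_⟩
        · rw [show Set.inclusion h01 (⟨(a' : U), hmem⟩ : S₀) = a' from Subtype.ext rfl]
          exact hE₁.refl a'
        · rw [show Set.inclusion h02 (⟨(a' : U), hmem⟩ : S₀) = b from Subtype.ext e]
          exact hE₂.refl b
      · exact ⟨c, hE₁.symm hc1, hc2⟩
    · exact h ▸ hE₂.refl b
  let std : Setoid (↥S₁ ⊕ ↥S₂) := ⟨R, hReq⟩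
  have wd : ∀ (t₁ u₁ t₂ u₂ : ↥S₁ ⊕ ↥S₂), std.r t₁ t₂ → std.r u₁ u₂ →
      Eh t₁ u₁ = Eh t₂ u₂ := by
    intro t₁ u₁ t₂ u₂ h1 h2
    exact propext ⟨fun h => hEheq.trans (hEheq.symm (RleE _ _ h1)) (hEheq.trans h (RleE _ _ h2)),
      fun h => hEheq.trans (RleE _ _ h1) (hEheq.trans h (hEheq.symm (RleE _ _ h2)))⟩
  set E : Quotient std → Quotient std → Prop := Quotient.lift₂ Eh wd with hE
  have Emk : ∀ t u, E (Quotient.mk std t) (Quotient.mk std u) ↔ Eh t u := fun _ _ => Iff.rfl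
  -- reduction lemma on the S₁ side
  have red₁ : ∀ (a : S₁) (u : ↥S₁ ⊕ ↥S₂), Eh (.inl a) u →
      (∃ a', E₁ a a' ∧ Quotient.mk std u = Quotient.mk std (.inl a')) ∨
      (∃ ha : (a : U) ∈ S₀, ∃ b : S₂, u = .inr b ∧ (b : U) ∉ S₀ ∧ E₂ (ι₂ ⟨a, ha⟩) b) := by
    rintro a (a' | b) h
    · exact Or.inl ⟨a', h, rfl⟩
    · obtain ⟨c, hc1, hc2⟩ := h
      by_cases hb : (b : U) ∈ S₀
      · refine Or.inl ⟨ι₁ ⟨(b : U), hb⟩, ?_, ?_⟩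
        · have e2 : ι₂ ⟨(b : U), hb⟩ = b := Subtype.ext rfl
          have : E₂ (ι₂ c) (ι₂ ⟨(b : U), hb⟩) := by rw [e2]; exact hc2
          exact hE₁.trans hc1 ((hr c _).2 this)
        · exact Quotient.sound (Or.inl ⟨rfl, hb⟩)
      · by_cases ha : (a : U) ∈ S₀
        · refine Or.inr ⟨ha, b, rfl, hb, ?_⟩
          have e1 : ι₁ ⟨(a : U), ha⟩ = a := Subtype.ext rfl
          have h1 : E₁ (ι₁ ⟨(a : U), ha⟩) (ι₁ c) := by rw [e1]; exact hc1
          exact hE₂.trans ((hr _ c).1 h1) hc2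
        · exact Or.inl ⟨a, hE₁.refl a,
            Quotient.sound (Or.inr ⟨ha, hb, c, hE₁.symm hc1, hc2⟩)⟩
  -- reduction lemma on the S₂ side
  have red₂ : ∀ (b : S₂) (u : ↥S₁ ⊕ ↥S₂), Eh (.inr b) u →
      (∃ b', E₂ b b' ∧ Quotient.mk std u = Quotient.mk std (.inr b')) ∨
      (∃ hb : (b : U) ∈ S₀, ∃ a : S₁, u = .inl a ∧ (a : U) ∉ S₀ ∧ E₁ (ι₁ ⟨b, hb⟩) a) := by
    rintro b (a | b') h
    · obtain ⟨c, hc1, hc2⟩ := h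
      by_cases ha : (a : U) ∈ S₀
      · refine Or.inl ⟨ι₂ ⟨(a : U), ha⟩, ?_, ?_⟩
        · have e1 : ι₁ ⟨(a : U), ha⟩ = a := Subtype.ext rfl
          have h1 : E₁ (ι₁ ⟨(a : U), ha⟩) (ι₁ c) := by rw [e1]; exact hc1
          exact hE₂.symm (hE₂.trans ((hr _ c).1 h1) hc2)
        · exact Quotient.sound (Or.inl ⟨rfl, ha⟩)
      · by_cases hb : (b : U) ∈ S₀
        · refine Or.inr ⟨hb, a, rfl, ha, ?_⟩
          have e2 : ι₂ ⟨(b : U), hb⟩ = b := Subtype.ext rfl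
          have h2 : E₂ (ι₂ c) (ι₂ ⟨(b : U), hb⟩) := by rw [e2]; exact hc2
          exact hE₁.trans (hE₁.symm ((hr c _).2 h2)) (hE₁.symm hc1)
        · exact Or.inl ⟨b, hE₂.refl b,
            Quotient.sound (Or.inr ⟨ha, hb, c, hE₁.symm hc1, hc2⟩)⟩
    · exact Or.inl ⟨b', h, rfl⟩

  -- mixed-case lemma, S₁ side
  have mix₁ : ∀ (a a' : S₁) (b : S₂) (ha : (a : U) ∈ S₀), E₁ a a' → (b : U) ∉ S₀ →
      E₂ (ι₂ ⟨(a : U), ha⟩) b →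
      Quotient.mk std (.inl a') = Quotient.mk std (.inl a) ∨
      Quotient.mk std (.inr b) = Quotient.mk std (.inl a) ∨
      Quotient.mk std (.inl a') = Quotient.mk std (.inr b) := by
    intro a a' b ha h1 hb h2
    by_cases he : a' = a
    · exact Or.inl (by rw [he])
    · by_cases ha' : (a' : U) ∈ S₀
      · exfalso
        have hE2aa' : E₂ (ι₂ ⟨(a : U), ha⟩) (ι₂ ⟨(a' : U), ha'⟩) := by
          refine (hr _ _).1 ?_
          rw [hι₁, show Set.inclusion h01 (⟨(a : U), ha⟩ : S₀) = a from Subtype.ext rfl,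
            show Set.inclusion h01 (⟨(a' : U), ha'⟩ : S₀) = a' from Subtype.ext rfl]
          exact h1
        rcases tri₂ _ _ _ hE2aa' h2 with h | h | h
        · have := Set.inclusion_injective h02 (hι₂ ▸ h)
          exact he (Subtype.ext (congrArg Subtype.val this).symm)
        · exact hb (incl_eq_mem h02 ⟨(a : U), ha⟩ h)
        · exact hb (incl_eq_mem h02 ⟨(a' : U), ha'⟩ h)
      · refine Or.inr (Or.inr (Quotient.sound (Or.inr ⟨ha', hb, ⟨(a : U), ha⟩, ?_, ?_⟩)))
        · rw [show Set.inclusion h01 (⟨(a : U), ha⟩ : S₀) = a from Subtype.ext rfl]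
          exact h1
        · exact h2
  -- key lemma, S₁ side
  have key₁ : ∀ (a : S₁) (u v : ↥S₁ ⊕ ↥S₂), Eh (.inl a) u → Eh (.inl a) v →
      Quotient.mk std u = Quotient.mk std (.inl a) ∨
      Quotient.mk std v = Quotient.mk std (.inl a) ∨
      Quotient.mk std u = Quotient.mk std v := by
    intro a u v hu hv
    rcases red₁ a u hu with ⟨a', h', e'⟩ | ⟨ha, b, rfl, hb, h2⟩
    · rcases red₁ a v hv with ⟨a'', h'', e''⟩ | ⟨ha, b, rfl, hb, h2⟩
      · rcases tri₁ a a' a'' h' h'' with h | h | h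
        · exact Or.inl (e'.trans (congrArg (fun z => Quotient.mk std (.inl z)) h.symm))
        · exact Or.inr (Or.inl (e''.trans (congrArg (fun z => Quotient.mk std (.inl z)) h.symm)))
        · exact Or.inr (Or.inr (e'.trans ((congrArg (fun z => Quotient.mk std (.inl z)) h).trans e''.symm)))
      · rcases mix₁ a a' b ha h' hb h2 with h | h | h
        · exact Or.inl (e'.trans h)
        · exact Or.inr (Or.inl h)
        · exact Or.inr (Or.inr (e'.trans h))
    · rcases red₁ a v hv with ⟨a'', h'', e''⟩ | ⟨ha2, b2, rfl, hb2, h22⟩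
      · rcases mix₁ a a'' b ha h'' hb h2 with h | h | h
        · exact Or.inr (Or.inl (e''.trans h))
        · exact Or.inl h
        · exact Or.inr (Or.inr (h.symm.trans e''.symm))
      · have h22' : E₂ (ι₂ ⟨(a : U), ha⟩) b2 := h22
        rcases tri₂ _ b b2 h2 h22' with h | h | h
        · exact absurd (incl_eq_mem h02 ⟨(a : U), ha⟩ h) hb
        · exact absurd (incl_eq_mem h02 ⟨(a : U), ha⟩ h) hb2
        · exact Or.inr (Or.inr (congrArg (fun z => Quotient.mk std (.inr z)) h))
  -- mixed-case lemma, S₂ side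
  have mix₂ : ∀ (b b' : S₂) (a : S₁) (hb : (b : U) ∈ S₀), E₂ b b' → (a : U) ∉ S₀ →
      E₁ (ι₁ ⟨(b : U), hb⟩) a →
      Quotient.mk std (.inr b') = Quotient.mk std (.inr b) ∨
      Quotient.mk std (.inl a) = Quotient.mk std (.inr b) ∨
      Quotient.mk std (.inr b') = Quotient.mk std (.inl a) := by
    intro b b' a hb h1 ha h2
    by_cases he : b' = b
    · exact Or.inl (by rw [he])
    · by_cases hb' : (b' : U) ∈ S₀
      · exfalso
        have hE1bb' : E₁ (ι₁ ⟨(b : U), hb⟩) (ι₁ ⟨(b' : U), hb'⟩) := by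
          refine (hr _ _).2 ?_
          rw [hι₂, show Set.inclusion h02 (⟨(b : U), hb⟩ : S₀) = b from Subtype.ext rfl,
            show Set.inclusion h02 (⟨(b' : U), hb'⟩ : S₀) = b' from Subtype.ext rfl]
          exact h1
        rcases tri₁ _ _ _ hE1bb' h2 with h | h | h
        · have := Set.inclusion_injective h01 (hι₁ ▸ h)
          exact he (Subtype.ext (congrArg Subtype.val this).symm)
        · exact ha (incl_eq_mem h01 ⟨(b : U), hb⟩ h)
        · exact ha (incl_eq_mem h01 ⟨(b' : U), hb'⟩ h)
      · refine Or.inr (Or.inr (Quotient.sound (Or.inr ⟨ha, hb', ⟨(b : U), hb⟩, ?_, ?_⟩)).symm)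
        · exact h2
        · rw [show Set.inclusion h02 (⟨(b : U), hb⟩ : S₀) = b from Subtype.ext rfl]
          exact h1
  -- key lemma, S₂ side
  have key₂ : ∀ (b : S₂) (u v : ↥S₁ ⊕ ↥S₂), Eh (.inr b) u → Eh (.inr b) v →
      Quotient.mk std u = Quotient.mk std (.inr b) ∨
      Quotient.mk std v = Quotient.mk std (.inr b) ∨
      Quotient.mk std u = Quotient.mk std v := by
    intro b u v hu hv
    rcases red₂ b u hu with ⟨b', h', e'⟩ | ⟨hb, a, rfl, ha, h2⟩
    · rcases red₂ b v hv with ⟨b'', h'', e''⟩ | ⟨hb, a, rfl, ha, h2⟩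
      · rcases tri₂ b b' b'' h' h'' with h | h | h
        · exact Or.inl (e'.trans (congrArg (fun z => Quotient.mk std (.inr z)) h.symm))
        · exact Or.inr (Or.inl (e''.trans (congrArg (fun z => Quotient.mk std (.inr z)) h.symm)))
        · exact Or.inr (Or.inr (e'.trans ((congrArg (fun z => Quotient.mk std (.inr z)) h).trans e''.symm)))
      · rcases mix₂ b b' a hb h' ha h2 with h | h | h
        · exact Or.inl (e'.trans h)
        · exact Or.inr (Or.inl h)
        · exact Or.inr (Or.inr (e'.trans h))
    · rcases red₂ b v hv with ⟨b'', h'', e''⟩ | ⟨hb2, a2, rfl, ha2, h22⟩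
      · rcases mix₂ b b'' a hb h'' ha h2 with h | h | h
        · exact Or.inr (Or.inl (e''.trans h))
        · exact Or.inl h
        · exact Or.inr (Or.inr (h.symm.trans e''.symm))
      · have h22' : E₁ (ι₁ ⟨(b : U), hb⟩) a2 := h22
        rcases tri₁ _ a a2 h2 h22' with h | h | h
        · exact absurd (incl_eq_mem h01 ⟨(b : U), hb⟩ h) ha
        · exact absurd (incl_eq_mem h01 ⟨(b : U), hb⟩ h) ha2
        · exact Or.inr (Or.inr (congrArg (fun z => Quotient.mk std (.inl z)) h))
  have key : ∀ (t u v : ↥S₁ ⊕ ↥S₂), Eh t u → Eh t v →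
      Quotient.mk std u = Quotient.mk std t ∨
      Quotient.mk std v = Quotient.mk std t ∨
      Quotient.mk std u = Quotient.mk std v := by
    rintro (a | b) u v hu hv
    · exact key₁ a u v hu hv
    · exact key₂ b u v hu hv
  -- assembly
  refine ⟨Quotient std, E, ⟨?_, ?_, ?_⟩, ?_,
    fun a => Quotient.mk std (.inl a), fun b => Quotient.mk std (.inr b),
    ?_, ?_, fun x y => Iff.rfl, fun x y => Iff.rfl,
    fun c => Quotient.sound (Or.inl ⟨rfl, c.2⟩)⟩
  · exact fun x => Quotient.inductionOn x (fun t => hEheq.refl t)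
  · exact fun {x y} h => Quotient.inductionOn₂ x y (fun t u h => hEheq.symm h) h
  · exact fun {x y z} h1 h2 =>
      Quotient.inductionOn₃ x y z (fun t u v h1 h2 => hEheq.trans h1 h2) h1 h2
  · intro x
    obtain ⟨t, rfl⟩ := Quotient.exists_rep x
    apply encard_le_two_of_tri
    intro y hy z hz w hw
    obtain ⟨uy, rfl⟩ := Quotient.exists_rep y
    obtain ⟨uz, rfl⟩ := Quotient.exists_rep z
    obtain ⟨uw, rfl⟩ := Quotient.exists_rep w
    have hy' : Eh t uy := hy
    have hz' : Eh t uz := hz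
    have hw' : Eh t uw := hw
    rcases key t uy uz hy' hz' with h | h | h
    · rcases key t uz uw hz' hw' with g | g | g
      · exact Or.inl (h.trans g.symm)
      · exact Or.inr (Or.inl (h.trans g.symm))
      · exact Or.inr (Or.inr g)
    · rcases key t uy uw hy' hw' with g | g | g
      · exact Or.inl (g.trans h.symm)
      · exact Or.inr (Or.inr (h.trans g.symm))
      · exact Or.inr (Or.inl g)
    · exact Or.inl h
  · intro a a' h
    have := Quotient.exact h
    exact this
  · intro b b' h
    have := Quotient.exact h
    exact this
end

section
/- Disjoint amalgamation fails in the class of equivalence relations with classes of size at most two: let X be a set with 0 ∈ X and 1, 2 ∉ X (with 1 ≠ 2), let E₀ be the identity relation on X, and for l = 1, 2 let Eₗ be the equivalence relation on X ∪ {l} whose only nontrivial class is {0, l}. Then for any set S, any equivalence relation E on S with all classes of size at most 2, and any injective maps f₁ : X ∪ {1} → S, f₂ : X ∪ {2} → S that agree on X and preserve and reflect the equivalence relations, we must have f₁(1) = f₂(2); in particular f₁[X ∪ {1}] ∩ f₂[X ∪ {2}] ≠ f₁[X]. -/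
/-- Disjoint amalgamation fails for equivalence relations with classes of size ≤ 2:
any amalgam of the two one-point extensions adding a partner to 0 must identify
the two new points. -/
theorem stmt_4 {U : Type u} (X : Set U) (x0 : U) (hx0 : x0 ∈ X)
    (a1 a2 : U) (ha1 : a1 ∉ X) (ha2 : a2 ∉ X) (ha12 : a1 ≠ a2)
    (S : Type v) (E : S → S → Prop) (hE : Equivalence E)
    (hsmall : ∀ x, Set.encard {y | E x y} ≤ 2)
    (f₁ : (X ∪ {a1} : Set U) → S) (f₂ : (X ∪ {a2} : Set U) → S)
    (hinj₁ : Function.Injective f₁) (hinj₂ : Function.Injective f₂)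
    (hagree : ∀ (x : U) (hx : x ∈ X),
      f₁ ⟨x, Set.mem_union_left _ hx⟩ = f₂ ⟨x, Set.mem_union_left _ hx⟩)
    (hpr₁ : ∀ x y : (X ∪ {a1} : Set U),
      ((x : U) = y ∨ ((x : U) = x0 ∧ (y : U) = a1) ∨ ((x : U) = a1 ∧ (y : U) = x0)) ↔
        E (f₁ x) (f₁ y))
    (hpr₂ : ∀ x y : (X ∪ {a2} : Set U),
      ((x : U) = y ∨ ((x : U) = x0 ∧ (y : U) = a2) ∨ ((x : U) = a2 ∧ (y : U) = x0)) ↔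
        E (f₂ x) (f₂ y)) :
    f₁ ⟨a1, Set.mem_union_right _ (Set.mem_singleton a1)⟩ =
      f₂ ⟨a2, Set.mem_union_right _ (Set.mem_singleton a2)⟩ ∧
    Set.range f₁ ∩ Set.range f₂ ≠ f₁ '' {x : (X ∪ {a1} : Set U) | (x : U) ∈ X} := by
  set x0₁ : (X ∪ {a1} : Set U) := ⟨x0, Set.mem_union_left _ hx0⟩ with hx0₁
  set x0₂ : (X ∪ {a2} : Set U) := ⟨x0, Set.mem_union_left _ hx0⟩ with hx0₂
  set p1 : (X ∪ {a1} : Set U) := ⟨a1, Set.mem_union_right _ (Set.mem_singleton a1)⟩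
  set p2 : (X ∪ {a2} : Set U) := ⟨a2, Set.mem_union_right _ (Set.mem_singleton a2)⟩
  have hx0a1 : x0 ≠ a1 := fun h => ha1 (h ▸ hx0)
  have hx0a2 : x0 ≠ a2 := fun h => ha2 (h ▸ hx0)
  have hE1 : E (f₁ x0₁) (f₁ p1) := (hpr₁ x0₁ p1).mp (Or.inr (Or.inl ⟨rfl, rfl⟩))
  have hE2 : E (f₂ x0₂) (f₂ p2) := (hpr₂ x0₂ p2).mp (Or.inr (Or.inl ⟨rfl, rfl⟩))
  have hag : f₁ x0₁ = f₂ x0₂ := hagree x0 hx0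
  have hne1 : f₁ x0₁ ≠ f₁ p1 := by
    intro h
    exact hx0a1 (congrArg Subtype.val (hinj₁ h))
  have hne2 : f₁ x0₁ ≠ f₂ p2 := by
    intro h
    rw [hag] at h
    exact hx0a2 (congrArg Subtype.val (hinj₂ h))
  have hmain : f₁ p1 = f₂ p2 := by
    by_contra hne
    have hsub : ({f₁ x0₁, f₁ p1, f₂ p2} : Set S) ⊆ {y | E (f₁ x0₁) y} := by
      intro y hy
      rcases hy with h | h | h
      · subst h; exact hE.refl _
      · subst h; exact hE1
      · subst h; rw [hag]; exact hE2
    have hcard : ({f₁ x0₁, f₁ p1, f₂ p2} : Set S).encard = 3 := by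
      rw [Set.encard_insert_of_notMem (by simp [hne1, hne2]),
        Set.encard_insert_of_notMem (by simp [hne]), Set.encard_singleton]
      rfl
    have := (Set.encard_mono hsub).trans (hsmall (f₁ x0₁))
    rw [hcard] at this
    norm_num at this
  refine ⟨hmain, ?_⟩
  intro h
  have hmem : f₁ p1 ∈ Set.range f₁ ∩ Set.range f₂ :=
    ⟨⟨p1, rfl⟩, ⟨p2, hmain.symm⟩⟩
  rw [h] at hmem
  obtain ⟨⟨x, hxmem⟩, hxX, hfx⟩ := hmem
  have : x = a1 := congrArg Subtype.val (hinj₁ hfx)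
  exact ha1 (this ▸ hxX)
end
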